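/- For all x in [0,1], 0 ≤ τ(x) ≤ 2/3, and τ(1/3) = 2/3, so the maximum value 2/3 is attained. -/

import Mathlib

open scoped BigOperators

/-- Distance from a real number to the nearest integer. -/
noncomputable def nearestDist (t : ℝ) : ℝ := |t - round t|

/-- The Takagi function. -/
noncomputable def takagi (x : ℝ) : ℝ := ∑' n : ℕ, (1 / 2 ^ n) * nearestDist (2 ^ n * x)

/-- Partial Takagi function of level `n`. -/
noncomputable def takagiPartial (n : ℕ) (x : ℝ) : ℝ :=
  ∑ j ∈ Finset.range n, (1 / 2 ^ j) * nearestDist (2 ^ j * x)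

/-- The symmetric tent map. -/
noncomputable def tent (x : ℝ) : ℝ := if x ≤ 1 / 2 then 2 * x else 2 - 2 * x

lemma nd_nonneg (t : ℝ) : 0 ≤ nearestDist t := abs_nonneg _

lemma nd_le_half (t : ℝ) : nearestDist t ≤ 1 / 2 := abs_sub_round t

lemma nd_add_int (t : ℝ) (m : ℤ) : nearestDist (t + m) = nearestDist t := by
  unfold nearestDist
  rw [round_add_intCast]
  push_cast
  ring_nf

lemma nd_double (t : ℝ) : nearestDist (2 * t) ≤ 1 - 2 * nearestDist t := by
  set r : ℤ := round t with hr
  have hd : |t - r| ≤ 1 / 2 := abs_sub_round t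
  rcases le_or_gt (r : ℝ) t with h | h
  · have : nearestDist (2 * t) ≤ |2 * t - ((2 * r + 1 : ℤ) : ℝ)| := round_le _ _
    have habs : |t - r| = t - r := abs_of_nonneg (by linarith)
    push_cast at this
    rw [abs_sub_le_iff] at hd
    unfold nearestDist
    rw [← hr, habs]
    calc |2 * t - round (2 * t)| ≤ |2 * t - (2 * r + 1)| := this
      _ = 1 - 2 * (t - r) := by
          rw [abs_of_nonpos (by linarith [hd.1])]; ring
      _ ≤ 1 - 2 * (t - r) := le_refl _
  · have : nearestDist (2 * t) ≤ |2 * t - ((2 * r - 1 : ℤ) : ℝ)| := round_le _ _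
    have habs : |t - r| = -(t - r) := abs_of_neg (by linarith)
    push_cast at this
    rw [abs_sub_le_iff] at hd
    unfold nearestDist
    rw [← hr, habs]
    calc |2 * t - round (2 * t)| ≤ |2 * t - (2 * r - 1)| := this
      _ = 1 - 2 * (-(t - r)) := by
          rw [abs_of_nonneg (by linarith [hd.2])]; ring

lemma takagi_summable (x : ℝ) :
    Summable (fun n : ℕ => (1 / 2 ^ n : ℝ) * nearestDist (2 ^ n * x)) := by
  apply Summable.of_nonneg_of_le
    (fun n => mul_nonneg (by positivity) (nd_nonneg _))
    (fun n => ?_) (((summable_geometric_of_lt_one (by norm_num) (by norm_num :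
      (1/2:ℝ) < 1))).mul_left (1/2))
  calc (1 / 2 ^ n : ℝ) * nearestDist (2 ^ n * x) ≤ (1 / 2 ^ n) * (1 / 2) :=
        mul_le_mul_of_nonneg_left (nd_le_half _) (by positivity)
    _ = 1 / 2 * (1 / 2) ^ n := by rw [div_pow, one_pow]; ring

lemma nd_third (n : ℕ) : nearestDist (2 ^ n * (1 / 3)) = 1 / 3 := by
  induction n using Nat.twoStepInduction with
  | zero =>
      have h0 : round ((1:ℝ)/3) = 0 := by
        rw [round_eq_zero_iff]; constructor <;> norm_num
      unfold nearestDist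
      rw [show (2:ℝ)^0 * (1/3) = 1/3 by norm_num, h0]
      norm_num
  | one =>
      have h1 : round ((2:ℝ)/3) = 1 := by
        rw [round_eq, show (2:ℝ)/3 + 1/2 = 7/6 by norm_num,
          Int.floor_eq_iff]
        norm_num
      unfold nearestDist
      rw [show (2:ℝ)^1 * (1/3) = 2/3 by norm_num, h1]
      rw [show (2:ℝ)/3 - (1:ℤ) = -(1/3) by push_cast; ring]
      norm_num
  | more n ih _ =>
      have : (2:ℝ) ^ (n + 2) * (1 / 3) = 2 ^ n * (1/3) + ((2 ^ n : ℤ) : ℝ) := by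
        push_cast; ring
      rw [this, nd_add_int, ih]

theorem takagi_bounds :
    (∀ x ∈ Set.Icc (0:ℝ) 1, 0 ≤ takagi x ∧ takagi x ≤ 2 / 3) ∧
    takagi (1 / 3) = 2 / 3 := by
  constructor
  · intro x _
    set f : ℕ → ℝ := fun n => (1 / 2 ^ n : ℝ) * nearestDist (2 ^ n * x) with hf
    have hsum : Summable f := takagi_summable x
    have hnn : ∀ n, 0 ≤ f n := fun n => mul_nonneg (by positivity) (nd_nonneg _)
    constructor
    · exact tsum_nonneg hnn
    · have he : Summable (fun k : ℕ => f (2 * k)) :=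
        hsum.comp_injective (fun a b h => by omega)
      have ho : Summable (fun k : ℕ => f (2 * k + 1)) :=
        hsum.comp_injective (fun a b h => by omega)
      have hsplit : takagi x = ∑' k : ℕ, (f (2 * k) + f (2 * k + 1)) := by
        rw [takagi, ← tsum_even_add_odd he ho, ← Summable.tsum_add he ho]
      rw [hsplit]
      have hpair : ∀ k : ℕ, f (2 * k) + f (2 * k + 1) ≤ 1 / 2 * (1 / 4) ^ k := by
        intro k
        have key := nd_double (2 ^ (2 * k) * x)
        have h2 : (2:ℝ) ^ (2 * k + 1) * x = 2 * (2 ^ (2 * k) * x) := by ring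
        have hp4 : ((2:ℝ) ^ (2*k)) = 4 ^ k := by
          rw [pow_mul]; norm_num
        simp only [hf, h2]
        have hpos : (0:ℝ) < (4:ℝ) ^ k := by positivity
        calc (1 / 2 ^ (2*k) : ℝ) * nearestDist (2 ^ (2*k) * x)
              + (1 / 2 ^ (2*k+1)) * nearestDist (2 * (2 ^ (2*k) * x))
            ≤ (1 / 2 ^ (2*k)) * nearestDist (2 ^ (2*k) * x)
              + (1 / 2 ^ (2*k+1)) * (1 - 2 * nearestDist (2 ^ (2*k) * x)) := by
              gcongr
          _ = 1 / 2 ^ (2*k+1) := by ring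
          _ = 1 / 2 * (1/4) ^ k := by
              rw [pow_succ, hp4]
              rw [div_pow, one_pow]
              field_simp
      calc ∑' k : ℕ, (f (2 * k) + f (2 * k + 1))
          ≤ ∑' k : ℕ, (1 / 2 : ℝ) * (1 / 4) ^ k := by
            apply Summable.tsum_le_tsum hpair (he.add ho)
            exact (summable_geometric_of_lt_one (by norm_num) (by norm_num)).mul_left _
        _ = 1 / 2 * (1 - 1/4)⁻¹ := by
            rw [tsum_mul_left, tsum_geometric_of_lt_one (by norm_num) (by norm_num)]
        _ = 2 / 3 := by norm_num
  · unfold takagi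
    have : ∀ n : ℕ, (1 / 2 ^ n : ℝ) * nearestDist (2 ^ n * (1 / 3)) = 1/3 * (1/2)^n := by
      intro n
      rw [nd_third n, div_pow, one_pow]; ring
    rw [tsum_congr this, tsum_mul_left,
      tsum_geometric_of_lt_one (by norm_num) (by norm_num)]
    norm_num
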